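/- If t ∈ T = {w ∈ W | w(B₁) = B₁}, then (ρ′, Σ_{α ∈ Q(t)} α) = 0. -/

import Mathlib

open scoped Classical RealInnerProductSpace

/-- Context: `R` is a finite crystallographic root system in a real inner product
space `V`, with Weyl group `W` (generated by the reflections `s α`), positive
system `Rpos`, simple roots `B`; `B1 ⊆ B` and `R1` is the subroot system with
simple roots `B1`, with positive roots `R1 ∩ Rpos` and Weyl group `W1`. -/
theorem stmt_8
    {V : Type*} [NormedAddCommGroup V] [InnerProductSpace ℝ V]
    (R : Finset V)
    (hR0 : ∀ α ∈ R, α ≠ 0)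
    (hRcrys : ∀ α ∈ R, ∀ β ∈ R, ∃ n : ℤ, 2 * ⟪β, α⟫ / ⟪α, α⟫ = (n : ℝ))
    (hRred : ∀ α ∈ R, ∀ t : ℝ, t • α ∈ R → t = 1 ∨ t = -1)
    (s : V → (V ≃ₗᵢ[ℝ] V))
    (hs : ∀ α ∈ R, ∀ x : V, s α x = x - (2 * ⟪x, α⟫ / ⟪α, α⟫) • α)
    (hRs : ∀ α ∈ R, ∀ β ∈ R, s α β ∈ R)
    (W : Subgroup (V ≃ₗᵢ[ℝ] V))
    (hW : W = Subgroup.closure {g | ∃ α ∈ R, g = s α})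
    (Rpos : Finset V) (hRposSub : Rpos ⊆ R)
    (hRsplit : ∀ α ∈ R, (α ∈ Rpos ∨ -α ∈ Rpos) ∧ ¬(α ∈ Rpos ∧ -α ∈ Rpos))
    (B : Finset V) (hBsub : B ⊆ Rpos)
    (hBindep : LinearIndependent ℝ (Subtype.val : {x : V // x ∈ B} → V))
    (hBgen : ∀ α ∈ Rpos, ∃ c : V → ℕ, α = ∑ b ∈ B, (c b : ℝ) • b)
    (B1 : Finset V) (hB1B : B1 ⊆ B)
    (R1 : Finset V)
    (hR1 : ∀ α, α ∈ R1 ↔ α ∈ R ∧ (α : V) ∈ Submodule.span ℝ (B1 : Set V))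
    (t : V ≃ₗᵢ[ℝ] V) (htW : t ∈ W)
    (ht : Finset.image (fun α => t α) B1 = B1) :
    ⟪(2⁻¹ : ℝ) • ∑ α ∈ R1 ∩ Rpos, α,
      ∑ α ∈ Rpos.filter (fun β => -(t β) ∈ Rpos), α⟫ = 0 := by
  classical
  -- Step 1: every element of W maps R onto R.
  have himg : ∀ g ∈ W, Finset.image (fun x => g x) R = R := by
    intro g hg
    rw [hW] at hg
    induction hg using Subgroup.closure_induction with
    | mem x hx =>
        obtain ⟨α, hα, rfl⟩ := hx
        apply Finset.eq_of_subset_of_card_le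
        · intro y hy
          obtain ⟨β, hβ, rfl⟩ := Finset.mem_image.mp hy
          exact hRs α hα β hβ
        · rw [Finset.card_image_of_injective _ (s α).injective]
    | one => simp
    | mul x y hx hy ihx ihy =>
        have h1 : Finset.image (fun v => (x * y) v) R
            = Finset.image (fun v => x v) (Finset.image (fun v => y v) R) := by
          rw [Finset.image_image]; rfl
        rw [h1, ihy, ihx]
    | inv x hx ih =>
        conv_lhs => rw [← ih]
        rw [Finset.image_image]
        have : ((fun v => x⁻¹ v) ∘ fun v => x v) = id := by
          funext v; exact x.symm_apply_apply v
        rw [this, Finset.image_id]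
  have htR : ∀ β ∈ R, t β ∈ R := fun β hβ =>
    himg t htW ▸ Finset.mem_image_of_mem _ hβ
  have htsymmR : ∀ γ ∈ R, t.symm γ ∈ R := by
    intro γ hγ
    rw [← himg t htW] at hγ
    obtain ⟨β, hβ, rfl⟩ := Finset.mem_image.mp hγ
    simpa using hβ
  -- linear independence in convenient form
  have hindep' : ∀ f : V → ℝ, (∑ b ∈ B, f b • b) = 0 → ∀ b ∈ B, f b = 0 := by
    intro f hf b hb
    have hli := Fintype.linearIndependent_iff.mp hBindep (fun i => f i)
    have hsum : ∑ i : {x // x ∈ B}, f i • (i : V) = 0 := by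
      rw [Finset.sum_coe_sort B (fun b => f b • b)]; exact hf
    exact hli hsum ⟨b, hb⟩
  -- positive roots in span of B1 are nonneg combinations of B1
  have hposB1 : ∀ β ∈ Rpos, (β : V) ∈ Submodule.span ℝ (B1 : Set V) →
      ∃ c : V → ℕ, β = ∑ b ∈ B1, (c b : ℝ) • b := by
    intro β hβ hspan
    obtain ⟨c, hc⟩ := hBgen β hβ
    obtain ⟨d, -, hd⟩ := Submodule.mem_span_finset.mp hspan
    refine ⟨c, ?_⟩
    have hdB : ∑ b ∈ B, (if b ∈ B1 then d b else 0) • b = β := by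
      rw [← Finset.sum_subset hB1B (by intro x _ hx; rw [if_neg hx, zero_smul])]
      rw [← hd]
      exact Finset.sum_congr rfl fun x hx => by rw [if_pos hx]
    have hzero : ∑ b ∈ B, ((c b : ℝ) - (if b ∈ B1 then d b else 0)) • b = 0 := by
      simp only [sub_smul, Finset.sum_sub_distrib, hdB, ← hc, sub_self]
    have hkey := hindep' _ hzero
    rw [hc]
    symm
    apply Finset.sum_subset hB1B
    intro x hx hx1
    have := hkey x hx
    rw [if_neg hx1, sub_zero] at this
    rw [this, zero_smul]
  have hB1t : ∀ b ∈ B1, t b ∈ B1 := fun b hb =>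
    ht ▸ Finset.mem_image_of_mem _ hb
  -- t preserves the span of B1
  have hspan_t : ∀ x ∈ Submodule.span ℝ (B1 : Set V),
      t x ∈ Submodule.span ℝ (B1 : Set V) := by
    intro x hx
    induction hx using Submodule.span_induction with
    | mem y hy => exact Submodule.subset_span (hB1t y hy)
    | zero => simp
    | add y z _ _ ihy ihz => rw [map_add]; exact Submodule.add_mem _ ihy ihz
    | smul a y _ ihy => rw [map_smul]; exact Submodule.smul_mem _ _ ihy
  -- t maps R1 ∩ Rpos to itself
  have hR1posmap : ∀ β ∈ R1 ∩ Rpos, t β ∈ R1 ∩ Rpos := by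
    intro β hβ
    rw [Finset.mem_inter] at hβ
    obtain ⟨hβ1, hβp⟩ := hβ
    obtain ⟨hβR, hβspan⟩ := (hR1 β).mp hβ1
    have htβR : t β ∈ R := htR β hβR
    have htβspan : t β ∈ Submodule.span ℝ (B1 : Set V) := hspan_t β hβspan
    have htβpos : t β ∈ Rpos := by
      rcases (hRsplit (t β) htβR).1 with h | h
      · exact h
      · exfalso
        obtain ⟨c, hc⟩ := hposB1 β hβp hβspan
        obtain ⟨e, he⟩ := hBgen _ (h)
        have htc : t β = ∑ b ∈ B1, (c b : ℝ) • t b := by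
          rw [hc, map_sum]
          exact Finset.sum_congr rfl fun x _ => by rw [map_smul]
        have hreidx : ∑ b ∈ B1, (c b : ℝ) • t b
            = ∑ b ∈ B1, (c (t.symm b) : ℝ) • b := by
          conv_rhs => rw [← ht]
          rw [Finset.sum_image (fun x _ y _ h => t.injective h)]
          simp
        have hzero : ∑ b ∈ B, ((if b ∈ B1 then (c (t.symm b) : ℝ) else 0) + e b) • b
            = 0 := by
          simp only [add_smul, Finset.sum_add_distrib]
          have h1 : ∑ b ∈ B, (if b ∈ B1 then (c (t.symm b) : ℝ) else 0) • b = t β := by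
            rw [← Finset.sum_subset hB1B (by intro x _ hx; rw [if_neg hx, zero_smul])]
            rw [htc, hreidx]
            exact Finset.sum_congr rfl fun x hx => by rw [if_pos hx]
          rw [h1, ← he]
          simp
        have hkey := hindep' _ hzero
        have hezero : ∀ b ∈ B, (e b : ℝ) = 0 := by
          intro b hb
          have h0 := hkey b hb
          have h1 : (0 : ℝ) ≤ (if b ∈ B1 then (c (t.symm b) : ℝ) else 0) := by
            split <;> positivity
          have h2 : (0 : ℝ) ≤ (e b : ℝ) := by positivity
          linarith
        have : -t β = 0 := by
          rw [he]
          apply Finset.sum_eq_zero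
          intro b hb
          rw [hezero b hb, zero_smul]
        exact hR0 _ (hRposSub h) this
    rw [Finset.mem_inter]
    exact ⟨(hR1 (t β)).mpr ⟨htβR, htβspan⟩, htβpos⟩
  have himg1 : Finset.image (fun β => t β) (R1 ∩ Rpos) = R1 ∩ Rpos := by
    apply Finset.eq_of_subset_of_card_le
    · intro y hy
      obtain ⟨β, hβ, rfl⟩ := Finset.mem_image.mp hy
      exact hR1posmap β hβ
    · rw [Finset.card_image_of_injective _ t.injective]
  -- P is fixed by t
  set P : V := ∑ α ∈ R1 ∩ Rpos, α with hP
  have htP : t P = P := by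
    rw [hP, map_sum]
    conv_rhs => rw [← himg1]
    rw [Finset.sum_image (fun x _ y _ h => t.injective h)]
  have hinner : ∀ β : V, ⟪P, t β⟫ = ⟪P, β⟫ := by
    intro β
    conv_lhs => rw [← htP]
    exact t.inner_map_map P β
  -- the splitting of Rpos
  set Q : Finset V := Rpos.filter (fun β => -(t β) ∈ Rpos) with hQ
  set A : Finset V := Rpos.filter (fun β => t β ∈ Rpos) with hA
  set X : Finset V := A.image (fun β => t β) with hX
  set Y : Finset V := Q.image (fun β => -(t β)) with hY
  have hinjneg : Function.Injective (fun β : V => -(t β)) := by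
    intro x y h
    simp only [neg_inj] at h
    exact t.injective h
  have hXY_disj : Disjoint X Y := by
    rw [Finset.disjoint_left]
    intro γ hγX hγY
    obtain ⟨β₁, hβ₁, h1⟩ := Finset.mem_image.mp hγX
    obtain ⟨β₂, hβ₂, h2⟩ := Finset.mem_image.mp hγY
    rw [Finset.mem_filter] at hβ₁ hβ₂
    have : t β₁ = t (-β₂) := by rw [map_neg]; rw [h1, ← h2]
    have hβeq : β₁ = -β₂ := t.injective this
    have := (hRsplit β₂ (hRposSub hβ₂.1)).2
    exact this ⟨hβ₂.1, hβeq ▸ hβ₁.1⟩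
  have hXY_union : X ∪ Y = Rpos := by
    apply Finset.Subset.antisymm
    · intro γ hγ
      rcases Finset.mem_union.mp hγ with h | h
      · obtain ⟨β, hβ, rfl⟩ := Finset.mem_image.mp h
        exact (Finset.mem_filter.mp hβ).2
      · obtain ⟨β, hβ, rfl⟩ := Finset.mem_image.mp h
        exact (Finset.mem_filter.mp hβ).2
    · intro γ hγ
      have hδ : t.symm γ ∈ R := htsymmR γ (hRposSub hγ)
      rcases (hRsplit _ hδ).1 with h | h
      · apply Finset.mem_union_left
        rw [hX, Finset.mem_image]
        refine ⟨t.symm γ, ?_, by simp⟩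
        rw [hA, Finset.mem_filter]
        exact ⟨h, by simp [hγ]⟩
      · apply Finset.mem_union_right
        rw [hY, Finset.mem_image]
        refine ⟨-(t.symm γ), ?_, by simp⟩
        rw [hQ, Finset.mem_filter]
        refine ⟨h, by simp [hγ]⟩
  -- main computation
  have hfilter_not : Rpos.filter (fun β => ¬ (t β ∈ Rpos)) = Q := by
    rw [hQ]
    apply Finset.filter_congr
    intro β hβ
    have htβ : t β ∈ R := htR β (hRposSub hβ)
    constructor
    · intro h
      rcases (hRsplit _ htβ).1 with h' | h'
      · exact absurd h' h
      · simpa using h'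
    · intro h h'
      exact (hRsplit _ htβ).2 ⟨h', by simpa using h⟩
  have eq3 : ∑ β ∈ Rpos, ⟪P, t β⟫ = ∑ β ∈ A, ⟪P, t β⟫ + ∑ β ∈ Q, ⟪P, t β⟫ := by
    rw [← Finset.sum_filter_add_sum_filter_not Rpos (fun β => t β ∈ Rpos), hfilter_not]
  have eq4 : ∑ β ∈ A, ⟪P, t β⟫ = ∑ γ ∈ X, ⟪P, γ⟫ := by
    rw [hX, Finset.sum_image (fun x _ y _ h => t.injective h)]
  have eq5 : ∑ β ∈ Q, ⟪P, t β⟫ = -∑ γ ∈ Y, ⟪P, γ⟫ := by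
    rw [hY, Finset.sum_image (fun x _ y _ h => hinjneg h)]
    rw [← Finset.sum_neg_distrib]
    exact Finset.sum_congr rfl fun x _ => by rw [inner_neg_right, neg_neg]
  have eq1 : ∑ β ∈ Rpos, ⟪P, β⟫ = ∑ γ ∈ X, ⟪P, γ⟫ + ∑ γ ∈ Y, ⟪P, γ⟫ := by
    rw [← Finset.sum_union hXY_disj, hXY_union]
  have eq2 : ∑ β ∈ Rpos, ⟪P, β⟫ = ∑ β ∈ Rpos, ⟪P, t β⟫ :=
    Finset.sum_congr rfl fun β _ => (hinner β).symm
  have hYzero : ∑ γ ∈ Y, ⟪P, γ⟫ = 0 := by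
    have := eq1
    rw [eq2, eq3, eq4, eq5] at this
    linarith
  have hQzero : ∑ β ∈ Q, ⟪P, β⟫ = 0 := by
    have h1 : ∑ β ∈ Q, ⟪P, t β⟫ = 0 := by rw [eq5, hYzero, neg_zero]
    rw [← h1]
    exact Finset.sum_congr rfl fun β _ => (hinner β).symm
  rw [real_inner_smul_left, inner_sum]
  rw [hQzero]
  ring
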